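/- Let N be a closed real subspace of a complex Hilbert space H with N ∩ N' = {0} (a factor subspace), where N' is the symplectic complement. If N + N' = H (the pair (N, N') is strongly standard), then for any closed real subspace M with N ⊆ M and M ∩ N' = {0} we have M = N. -/

import Mathlib

/-- The symplectic complement of a real subspace of a complex Hilbert space. -/
noncomputable def symplComp {H : Type*} [NormedAddCommGroup H] [InnerProductSpace ℂ H]
    (N : Submodule ℝ H) : Submodule ℝ H where
  carrier := {x | ∀ n ∈ N, (inner ℂ x n : ℂ).im = 0}
  zero_mem' := by intro n hn; simp
  add_mem' := by
    intro a b ha hb n hn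
    rw [inner_add_left]
    simp [ha n hn, hb n hn]
  smul_mem' := by
    intro c x hx n hn
    have h1 : (c • x : H) = ((c : ℂ) • x) := by
      simp [Complex.coe_algebraMap, algebraMap_smul]
    rw [h1, inner_smul_left]
    simp [hx n hn]

/-- If `N` is a factor subspace with `N + N' = H`, then any closed
real subspace `M ⊇ N` with `M ∩ N' = {0}` equals `N`. -/
theorem strongly_standard_factor_no_extension {H : Type*}
    [NormedAddCommGroup H] [InnerProductSpace ℂ H] [CompleteSpace H]
    (N : Submodule ℝ H) (hNc : IsClosed (N : Set H))
    (hfactor : N ⊓ symplComp N = ⊥)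
    (hsum : N ⊔ symplComp N = ⊤) :
    ∀ M : Submodule ℝ H, IsClosed (M : Set H) → N ≤ M → M ⊓ symplComp N = ⊥ →
      M = N := by
  intro M _ hNM hMF
  refine le_antisymm (fun m hm => ?_) hNM
  have hmem : m ∈ N ⊔ symplComp N := hsum ▸ Submodule.mem_top
  obtain ⟨n, hn, n', hn', rfl⟩ := Submodule.mem_sup.mp hmem
  have : n' ∈ M ⊓ symplComp N := by
    refine ⟨?_, hn'⟩
    have : n + n' - n ∈ M := M.sub_mem hm (hNM hn)
    simpa using this
  have hz : n' = 0 := by simpa [hMF] using this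
  simpa [hz] using hn
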